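/- For any fixed positive integer d, every positive integer n has as many partitions with λ₁ = λ₂ + λ_m + d as partitions with k₁ < k_m and λ₁ = λ₂ + d. -/

import Mathlib

/-- A partition `(λ₁,...,λ_m)×[k₁,...,k_m]`: strictly decreasing positive parts
with positive multiplicities, same length. -/
def IsPart (p : List ℕ × List ℕ) : Prop :=
  p.1.length = p.2.length ∧ List.Chain' (· > ·) p.1 ∧
  (∀ x ∈ p.1, 0 < x) ∧ (∀ x ∈ p.2, 0 < x)

/-- size of a partition: Σ kᵢ λᵢ -/
def psize (p : List ℕ × List ℕ) : ℕ := (List.zipWith (· * ·) p.1 p.2).sum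

def parts1 (L : List ℕ) : ℕ := L.headD 0      -- λ₁
def parts2 (L : List ℕ) : ℕ := L.tail.headD 0 -- λ₂
def parts3 (L : List ℕ) : ℕ := L.tail.tail.headD 0 -- λ₃
def partsLast (L : List ℕ) : ℕ := L.getLastD 0 -- λ_m
def partsPrelast (L : List ℕ) : ℕ := L.dropLast.getLastD 0 -- λ_{m-1}

def T0parts : List ℕ → List ℕ
  | a :: b :: t => b :: (t ++ [a - b])
  | l => l

def T0mults : List ℕ → List ℕ
  | a :: b :: t => (a + b) :: (t ++ [a])
  | l => l

def T1parts (L : List ℕ) : List ℕ := (parts1 L - partsLast L) :: L.tail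

def T1mults (K : List ℕ) : List ℕ := K.dropLast ++ [K.headD 0 + K.getLastD 0]

def TDparts (L : List ℕ) : List ℕ := L.tail

def TDmults : List ℕ → List ℕ
  | [a, b] => [2 * a + b]
  | a :: b :: t => (a + b) :: (t.dropLast ++ [a + t.getLastD 0])
  | l => l

def T0map (p : List ℕ × List ℕ) : List ℕ × List ℕ := (T0parts p.1, T0mults p.2)
def T1map (p : List ℕ × List ℕ) : List ℕ × List ℕ := (T1parts p.1, T1mults p.2)

/-- △₀ : partitions of dimension ≥ 2 with λ₁ < λ₂ + λ_m -/
def Tri0 : Set (List ℕ × List ℕ) :=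
  {p | IsPart p ∧ 2 ≤ p.1.length ∧ parts1 p.1 < parts2 p.1 + partsLast p.1}

/-- △₁ : partitions of dimension ≥ 2 with λ₁ > λ₂ + λ_m -/
def Tri1 : Set (List ℕ × List ℕ) :=
  {p | IsPart p ∧ 2 ≤ p.1.length ∧ parts2 p.1 + partsLast p.1 < parts1 p.1}

/-- M₀ : partitions of dimension ≥ 2 with k₁ > k_m -/
def M0 : Set (List ℕ × List ℕ) :=
  {p | IsPart p ∧ 2 ≤ p.1.length ∧ p.2.getLastD 0 < p.2.headD 0}

/-- M₁ : partitions of dimension ≥ 2 with k₁ < k_m -/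
def M1 : Set (List ℕ × List ℕ) :=
  {p | IsPart p ∧ 2 ≤ p.1.length ∧ p.2.headD 0 < p.2.getLastD 0}

/-- △_d^G : partitions with λ₂ + dλ_m < λ₁ < λ₂ + (d+1)λ_m -/
def GaussSet (d : ℕ) : Set (List ℕ × List ℕ) :=
  {p | IsPart p ∧ 2 ≤ p.1.length ∧
    parts2 p.1 + d * partsLast p.1 < parts1 p.1 ∧
    parts1 p.1 < parts2 p.1 + (d + 1) * partsLast p.1}


private lemma zipmul_concat (l₁ l₂ : List ℕ) (x y : ℕ) (h : l₁.length = l₂.length) :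
    (List.zipWith (· * ·) (l₁ ++ [x]) (l₂ ++ [y])).sum
      = (List.zipWith (· * ·) l₁ l₂).sum + x * y := by
  rw [List.zipWith_append h]; simp

/-- inverse of T1map -/
def Smap (p : List ℕ × List ℕ) : List ℕ × List ℕ :=
  ((parts1 p.1 + partsLast p.1) :: p.1.tail,
   p.2.dropLast ++ [p.2.getLastD 0 - p.2.headD 0])

private lemma hd_cc (k a : ℕ) (N : List ℕ) : ((k :: N) ++ [a]).headD 0 = k := rfl

private lemma last_cc (a : ℕ) (l : List ℕ) : (l ++ [a]).getLastD 0 = a := by simp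

private lemma plast (x b : ℕ) (t M : List ℕ) (lm : ℕ) (hbt : b :: t = M ++ [lm]) :
    partsLast (x :: b :: t) = lm := by
  rw [partsLast, List.getLastD_cons, hbt, List.getLastD_concat]

private lemma T1parts_eq (x b : ℕ) (t M : List ℕ) (lm : ℕ) (hbt : b :: t = M ++ [lm]) :
    T1parts (x :: b :: t) = (x - lm) :: b :: t := by
  rw [T1parts, plast x b t M lm hbt]; rfl

private lemma T1mults_eq (k j : ℕ) (N : List ℕ) :
    T1mults (k :: (N ++ [j])) = (k :: N) ++ [k + j] := by
  rw [T1mults, show k :: (N ++ [j]) = (k :: N) ++ [j] from rfl, List.dropLast_concat,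
    hd_cc, last_cc]

private lemma Smults_eq (k j : ℕ) (N : List ℕ) :
    (k :: (N ++ [j])).dropLast
        ++ [(k :: (N ++ [j])).getLastD 0 - (k :: (N ++ [j])).headD 0]
      = (k :: N) ++ [j - k] := by
  rw [show k :: (N ++ [j]) = (k :: N) ++ [j] from rfl, List.dropLast_concat,
    hd_cc, last_cc]

private lemma Smap_eq (a b : ℕ) (t M : List ℕ) (lm k j : ℕ) (N : List ℕ)
    (hbt : b :: t = M ++ [lm]) :
    Smap (a :: b :: t, k :: (N ++ [j])) = ((a + lm) :: b :: t, (k :: N) ++ [j - k]) := by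
  rw [Smap]
  simp only
  rw [plast a b t M lm hbt, Smults_eq]
  rfl

private lemma T1map_eq (a b : ℕ) (t M : List ℕ) (lm k j : ℕ) (N : List ℕ)
    (hbt : b :: t = M ++ [lm]) :
    T1map (a :: b :: t, k :: (N ++ [j])) = ((a - lm) :: b :: t, (k :: N) ++ [k + j]) := by
  rw [T1map]
  simp only
  rw [T1parts_eq a b t M lm hbt, T1mults_eq]

private lemma psize_cc (x k b : ℕ) (t M N : List ℕ) (lm j : ℕ)
    (hbt : b :: t = M ++ [lm]) (hMN : M.length = N.length) :
    psize (x :: b :: t, k :: (N ++ [j]))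
      = x * k + ((List.zipWith (· * ·) M N).sum + lm * j) := by
  rw [psize]
  simp only [List.zipWith_cons_cons, List.sum_cons]
  rw [hbt, zipmul_concat _ _ _ _ hMN]

private lemma decomp {p : List ℕ × List ℕ} (h1 : IsPart p) (h2 : 2 ≤ p.1.length) :
    ∃ a b t M lm k N j, p.1 = a :: b :: t ∧ b :: t = M ++ [lm] ∧
      p.2 = k :: (N ++ [j]) ∧ M.length = N.length ∧ t.length = N.length := by
  obtain ⟨L, K⟩ := p
  obtain ⟨hlen, -, -, -⟩ := h1
  simp only at *
  match L, K, hlen, h2 with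
  | a :: b :: t, k :: k2 :: ks, hlen, _ =>
    obtain ⟨M, lm, hM⟩ := (b :: t).eq_nil_or_concat'.resolve_left (by simp)
    obtain ⟨N, j, hN⟩ := (k2 :: ks).eq_nil_or_concat'.resolve_left (by simp)
    refine ⟨a, b, t, M, lm, k, N, j, rfl, hM, by rw [hN], ?_, ?_⟩ <;>
    · have h1 : (b :: t).length = (M ++ [lm]).length := by rw [hM]
      have h2 : (k2 :: ks).length = (N ++ [j]).length := by rw [hN]
      simp at h1 h2 hlen
      omega

private lemma mapsTo_fwd (d n : ℕ) (hd : 0 < d) :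
    Set.MapsTo T1map
      {p : List ℕ × List ℕ | IsPart p ∧ 2 ≤ p.1.length ∧ psize p = n ∧
        parts1 p.1 = parts2 p.1 + partsLast p.1 + d}
      {p : List ℕ × List ℕ | IsPart p ∧ 2 ≤ p.1.length ∧ psize p = n ∧
        p.2.headD 0 < p.2.getLastD 0 ∧ parts1 p.1 = parts2 p.1 + d} := by
  rintro p ⟨h1, h2, hsz, hcond⟩
  obtain ⟨a, b, t, M, lm, k, N, j, hL, hbt, hK, hMN, htN⟩ := decomp h1 h2
  obtain ⟨hlen, hch, hpos1, hpos2⟩ := h1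
  have ha : a = b + lm + d := by
    rw [hL] at hcond
    simp only [parts1, parts2, plast a b t M lm hbt, List.headD_cons,
      List.tail_cons] at hcond
    exact hcond
  have halm : a - lm = b + d := by omega
  have hpq : (p.1, p.2) = p := rfl
  have hT : T1map p = ((b + d) :: b :: t, (k :: N) ++ [k + j]) := by
    rw [← hpq, hL, hK, T1map_eq a b t M lm k j N hbt, halm]
  have hjpos : 0 < j := hpos2 j (by rw [hK]; simp)
  have hkpos : 0 < k := hpos2 k (by rw [hK]; simp)
  have hbpos : 0 < b := hpos1 b (by rw [hL]; simp)
  rw [hL] at hch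
  rw [List.Chain', List.isChain_cons_cons] at hch
  have hps : psize (T1map p) = n := by
    rw [← hpq, hL, hK, psize_cc a k b t M N lm j hbt hMN, ha] at hsz
    rw [hT, show (k :: N) ++ [k + j] = k :: (N ++ [k + j]) from rfl,
      psize_cc _ k b t M N lm (k + j) hbt hMN, ← hsz]
    ring
  refine ⟨⟨?_, ?_, ?_, ?_⟩, ?_, hps, ?_, ?_⟩
  · rw [hT]; simp; omega
  · rw [hT]
    exact List.isChain_cons_cons.2 ⟨by omega, hch.2⟩
  · rw [hT]
    intro x hx
    rcases List.mem_cons.1 hx with rfl | hx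
    · omega
    · exact hpos1 x (by rw [hL]; exact List.mem_cons_of_mem _ hx)
  · rw [hT]
    intro x hx
    simp only [List.cons_append, List.mem_cons, List.mem_append,
      List.mem_singleton] at hx
    rcases hx with rfl | hx | rfl | hx
    · exact hkpos
    · exact hpos2 x (by rw [hK]; simp [hx])
    · omega
    · simp at hx
  · rw [hT]; simp
  · rw [hT]
    simp only
    rw [hd_cc, last_cc]
    omega
  · rw [hT]
    simp [parts1, parts2]

private lemma mapsTo_bwd (d n : ℕ) (hd : 0 < d) :
    Set.MapsTo Smap
      {p : List ℕ × List ℕ | IsPart p ∧ 2 ≤ p.1.length ∧ psize p = n ∧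
        p.2.headD 0 < p.2.getLastD 0 ∧ parts1 p.1 = parts2 p.1 + d}
      {p : List ℕ × List ℕ | IsPart p ∧ 2 ≤ p.1.length ∧ psize p = n ∧
        parts1 p.1 = parts2 p.1 + partsLast p.1 + d} := by
  rintro p ⟨h1, h2, hsz, hkj, hcond⟩
  obtain ⟨a, b, t, M, lm, k, N, j, hL, hbt, hK, hMN, htN⟩ := decomp h1 h2
  obtain ⟨hlen, hch, hpos1, hpos2⟩ := h1
  have ha : a = b + d := by
    rw [hL] at hcond
    simpa [parts1, parts2] using hcond
  have hkj' : k < j := by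
    rw [hK, show k :: (N ++ [j]) = (k :: N) ++ [j] from rfl, hd_cc, last_cc] at hkj
    exact hkj
  obtain ⟨e, rfl⟩ : ∃ e, j = k + e := ⟨j - k, by omega⟩
  have hepos : 0 < e := by omega
  have hpq : (p.1, p.2) = p := rfl
  have hS : Smap p = ((a + lm) :: b :: t, (k :: N) ++ [e]) := by
    rw [← hpq, hL, hK, Smap_eq a b t M lm k (k + e) N hbt,
      show k + e - k = e from by omega]
  have hbpos : 0 < b := hpos1 b (by rw [hL]; simp)
  rw [hL] at hch
  rw [List.Chain', List.isChain_cons_cons] at hch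
  have hps : psize (Smap p) = n := by
    rw [← hpq, hL, hK, psize_cc a k b t M N lm (k + e) hbt hMN] at hsz
    rw [hS, show (k :: N) ++ [e] = k :: (N ++ [e]) from rfl,
      psize_cc _ k b t M N lm e hbt hMN, ← hsz, ha]
    ring
  refine ⟨⟨?_, ?_, ?_, ?_⟩, ?_, hps, ?_⟩
  · rw [hS]; simp; omega
  · rw [hS]
    exact List.isChain_cons_cons.2 ⟨by omega, hch.2⟩
  · rw [hS]
    intro x hx
    rcases List.mem_cons.1 hx with rfl | hx
    · omega
    · exact hpos1 x (by rw [hL]; exact List.mem_cons_of_mem _ hx)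
  · rw [hS]
    intro x hx
    simp only [List.cons_append, List.mem_cons, List.mem_append,
      List.mem_singleton] at hx
    rcases hx with rfl | hx | rfl | hx
    · exact hpos2 x (by rw [hK]; simp)
    · exact hpos2 x (by rw [hK]; simp [hx])
    · omega
    · simp at hx
  · rw [hS]; simp
  · rw [hS]
    simp only [parts1, parts2, List.headD_cons, List.tail_cons,
      plast (a + lm) b t M lm hbt]
    omega

private lemma left_inv (d n : ℕ) {p : List ℕ × List ℕ}
    (hp : p ∈ {p : List ℕ × List ℕ | IsPart p ∧ 2 ≤ p.1.length ∧ psize p = n ∧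
        parts1 p.1 = parts2 p.1 + partsLast p.1 + d}) :
    Smap (T1map p) = p := by
  obtain ⟨h1, h2, hsz, hcond⟩ := hp
  obtain ⟨a, b, t, M, lm, k, N, j, hL, hbt, hK, hMN, htN⟩ := decomp h1 h2
  have ha : a = b + lm + d := by
    rw [hL] at hcond
    simp only [parts1, parts2, plast a b t M lm hbt, List.headD_cons,
      List.tail_cons] at hcond
    exact hcond
  have hpq : (p.1, p.2) = p := rfl
  have hT : T1map p = ((a - lm) :: b :: t, k :: (N ++ [k + j])) := by
    rw [← hpq, hL, hK, T1map_eq a b t M lm k j N hbt]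
    rfl
  rw [hT, Smap_eq (a - lm) b t M lm k (k + j) N hbt,
    show a - lm + lm = a from by omega, show k + j - k = j from by omega,
    ← hL, show (k :: N) ++ [j] = k :: (N ++ [j]) from rfl, ← hK]

private lemma right_inv (d n : ℕ) {p : List ℕ × List ℕ}
    (hp : p ∈ {p : List ℕ × List ℕ | IsPart p ∧ 2 ≤ p.1.length ∧ psize p = n ∧
        p.2.headD 0 < p.2.getLastD 0 ∧ parts1 p.1 = parts2 p.1 + d}) :
    T1map (Smap p) = p := by
  obtain ⟨h1, h2, hsz, hkj, hcond⟩ := hp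
  obtain ⟨a, b, t, M, lm, k, N, j, hL, hbt, hK, hMN, htN⟩ := decomp h1 h2
  have hkj' : k ≤ j := by
    rw [hK, show k :: (N ++ [j]) = (k :: N) ++ [j] from rfl, hd_cc, last_cc] at hkj
    omega
  have hpq : (p.1, p.2) = p := rfl
  have hS : Smap p = ((a + lm) :: b :: t, k :: (N ++ [j - k])) := by
    rw [← hpq, hL, hK, Smap_eq a b t M lm k j N hbt]
    rfl
  rw [hS, T1map_eq (a + lm) b t M lm k (j - k) N hbt,
    show a + lm - lm = a from by omega, show k + (j - k) = j from by omega,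
    ← hL, show (k :: N) ++ [j] = k :: (N ++ [j]) from rfl, ← hK]



theorem stmt7 (d n : ℕ) (hd : 0 < d) (hn : 0 < n) :
    {p : List ℕ × List ℕ | IsPart p ∧ 2 ≤ p.1.length ∧ psize p = n ∧
        parts1 p.1 = parts2 p.1 + partsLast p.1 + d}.ncard =
    {p : List ℕ × List ℕ | IsPart p ∧ 2 ≤ p.1.length ∧ psize p = n ∧
        p.2.headD 0 < p.2.getLastD 0 ∧
        parts1 p.1 = parts2 p.1 + d}.ncard := by 
  have hbij : Set.BijOn T1map
      {p : List ℕ × List ℕ | IsPart p ∧ 2 ≤ p.1.length ∧ psize p = n ∧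
        parts1 p.1 = parts2 p.1 + partsLast p.1 + d}
      {p : List ℕ × List ℕ | IsPart p ∧ 2 ≤ p.1.length ∧ psize p = n ∧
        p.2.headD 0 < p.2.getLastD 0 ∧ parts1 p.1 = parts2 p.1 + d} :=
    Set.InvOn.bijOn ⟨fun p hp => left_inv d n hp, fun q hq => right_inv d n hq⟩
      (mapsTo_fwd d n hd) (mapsTo_bwd d n hd)
  rw [← hbij.image_eq, Set.ncard_image_of_injOn hbij.injOn]
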